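/- Let K be a non-degenerate bilinear kernel on ℝ^d satisfying the size estimate with constant C_K and the ω-regularity estimate. Then there exist constants 0 < c₀ ≤ C₀ and A₁ ≥ 3 (depending only on d, C_K, ω and the non-degeneracy constant) such that for every A ≥ A₁, every cube Q¹ ⊂ ℝ^d with centre c_{Q¹}, and all dyadic grids D⁰, D², there exist cubes Q⁰ ∈ D⁰, Q² ∈ D² and points c_{Q⁰} ∈ Q⁰, c_{Q²} ∈ Q² such that: (i) c₀·A·ℓ(Q¹) ≤ max(|c_{Q⁰} − c_{Q¹}|, |c_{Q²} − c_{Q¹}|) ≤ C₀·A·ℓ(Q¹) and c₀·ℓ(Q¹) ≤ ℓ(Q⁰), ℓ(Q²) ≤ C₀·ℓ(Q¹); (ii) c₀·A^{−2d}|Q¹|^{−2} ≤ |K(c_{Q⁰}, c_{Q¹}, c_{Q²})| ≤ C₀·A^{−2d}|Q¹|^{−2}; (iii) for every y ∈ Q¹, ∫_{Q⁰}∫_{Q²} |K(x,y,z) − K(c_{Q⁰}, c_{Q¹}, c_{Q²})| dx dz ≤ C₀·ω(A^{−1})·A^{−2d}; (iv) for every y ∈ Q¹, c₀·A^{−2d}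 ≤ |∫_{Q⁰}∫_{Q²} K(x,y,z) dx dz| ≤ ∫_{Q⁰}∫_{Q²} |K(x,y,z)| dx dz ≤ C₀·A^{−2d}. -/

import Mathlib

open MeasureTheory Set Filter
open scoped ENNReal NNReal Classical

noncomputable section

namespace Paper

/-- `ℝ^d` with the Euclidean norm. -/
abbrev Rd (d : ℕ) := EuclideanSpace ℝ (Fin d)

variable {d : ℕ}

/-- An axis-parallel cube in `ℝ^d`, given by its centre and (positive) side length. -/
structure Cube (d : ℕ) where
  center : Rd d
  side : ℝ
  side_pos : 0 < side

/-- The cube as a (half-open) subset of `ℝ^d`. -/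
def Cube.set (Q : Cube d) : Set (Rd d) :=
  {x | ∀ i, Q.center i - Q.side / 2 ≤ x i ∧ x i < Q.center i + Q.side / 2}

/-- The volume `ℓ(Q)^d` of a cube. -/
def Cube.vol (Q : Cube d) : ℝ := Q.side ^ d

/-- The distance between two subsets of `ℝ^d`. -/
def setDist (s t : Set (Rd d)) : ℝ := sInf (Set.image2 dist s t)

/-- The maximal pairwise distance among three cubes. -/
def maxPairDist (Q0 Q1 Q2 : Cube d) : ℝ :=
  max (max (setDist Q0.set Q1.set) (setDist Q0.set Q2.set)) (setDist Q1.set Q2.set)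

/-- A dyadic grid on `ℝ^d`: for each `k ∈ ℤ` the cubes of side `2^k` form a partition,
and any two cubes are nested or disjoint. -/
def IsDyadicGrid (D : Set (Cube d)) : Prop :=
  (∀ Q ∈ D, ∃ k : ℤ, Q.side = 2 ^ k) ∧
  (∀ (k : ℤ) (x : Rd d), ∃! Q : Cube d, Q ∈ D ∧ Q.side = 2 ^ k ∧ x ∈ Q.set) ∧
  (∀ Q ∈ D, ∀ P ∈ D, Q.set ⊆ P.set ∨ P.set ⊆ Q.set ∨ Disjoint Q.set P.set)

/-- The average `⟨f⟩_Q` of a real function over a cube. -/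
def cubeAvg (Q : Cube d) (f : Rd d → ℝ) : ℝ := Q.vol⁻¹ * ∫ x in Q.set, f x

/-- The average `⟨f⟩_Q` of a complex function over a cube. -/
def cubeAvgC (Q : Cube d) (f : Rd d → ℂ) : ℂ := (Q.vol : ℂ)⁻¹ * ∫ x in Q.set, f x

/-- The mean oscillation `osc(b;Q) = ⨍_Q |b - ⟨b⟩_Q|`. -/
def osc (b : Rd d → ℂ) (Q : Cube d) : ℝ :=
  Q.vol⁻¹ * ∫ x in Q.set, ‖b x - cubeAvgC Q b‖

/-- The size estimate for a bilinear kernel. -/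
def SizeEstimate (d : ℕ) (K : Rd d → Rd d → Rd d → ℂ) (CK : ℝ) : Prop :=
  ∀ x y z : Rd d, ¬(x = y ∧ y = z) →
    ‖K x y z‖ ≤ CK / (‖x - y‖ + ‖x - z‖) ^ (2 * d)

/-- A modulus of continuity: increasing, subadditive, vanishing at `0`. -/
def IsModulus (ω : ℝ → ℝ) : Prop :=
  ω 0 = 0 ∧ (∀ t, 0 ≤ ω t) ∧ MonotoneOn ω (Set.Ici 0) ∧
  (∀ s t, 0 ≤ s → 0 ≤ t → ω (s + t) ≤ ω s + ω t) ∧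
  Filter.Tendsto ω (nhdsWithin 0 (Set.Ioi 0)) (nhds 0)

/-- A Dini modulus. -/
def IsDini (ω : ℝ → ℝ) : Prop :=
  IsModulus ω ∧ IntegrableOn (fun t => ω t / t) (Set.Ioc (0:ℝ) 1)

/-- The `ω`-regularity estimate, for `K` and both of its partial adjoints. -/
def RegEstimate (d : ℕ) (K : Rd d → Rd d → Rd d → ℂ) (ω : ℝ → ℝ) : Prop :=
  ∀ G ∈ ({K, fun x y z => K y x z, fun x y z => K z y x} :
      Set (Rd d → Rd d → Rd d → ℂ)),
    ∀ x x' y z : Rd d, ‖x - x'‖ ≤ (1 / 2) * max ‖x - y‖ ‖x - z‖ →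
      ‖G x y z - G x' y z‖ ≤
        ω (‖x - x'‖ / (‖x - y‖ + ‖x - z‖)) / (‖x - y‖ + ‖x - z‖) ^ (2 * d)

/-- Non-degeneracy of a bilinear kernel, with constant `c`. -/
def NonDegenerate (d : ℕ) (K : Rd d → Rd d → Rd d → ℂ) (c : ℝ) : Prop :=
  (∀ (y : Rd d) (r : ℝ), 0 < r → ∃ x z : Rd d,
      r < max (max ‖x - y‖ ‖x - z‖) ‖y - z‖ ∧ c / r ^ (2 * d) ≤ ‖K x y z‖) ∧
  (∀ (z : Rd d) (r : ℝ), 0 < r → ∃ x y : Rd d,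
      r < max (max ‖x - y‖ ‖x - z‖) ‖y - z‖ ∧ c / r ^ (2 * d) ≤ ‖K x y z‖)

/-- The trilinear commutator form
`Λ_b(f₁,f₂;f₀) = ∭ (b(x)-b(y)) K(x,y,z) f₁(y) f₂(z) f₀(x) dy dz dx`. -/
def Lam (K : Rd d → Rd d → Rd d → ℂ) (b : Rd d → ℂ)
    (f₁ f₂ f₀ : Rd d → ℂ) : ℂ :=
  ∫ x, ∫ y, ∫ z, (b x - b y) * K x y z * f₁ y * f₂ z * f₀ x

/-- A triple of cubes of equal side length, with maximal pairwise distance comparable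
(with fixed absolute constants) to `A` times the side length. -/
def SepTriple (A : ℝ) (Q0 Q1 Q2 : Cube d) : Prop :=
  Q0.side = Q1.side ∧ Q1.side = Q2.side ∧
  A * Q0.side / 2 ≤ maxPairDist Q0 Q1 Q2 ∧
  maxPairDist Q0 Q1 Q2 ≤ 8 * (d + 1) * A * Q0.side

/-- Bounded, compactly supported, measurable functions. -/
def BCS (f : Rd d → ℂ) : Prop :=
  Measurable f ∧ HasCompactSupport f ∧ ∃ M, ∀ x, ‖f x‖ ≤ M

/-- Off-support kernel representation, tested on bounded compactly supported functions
with no common point in all three supports. -/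
def HasOffSupportKernel (K : Rd d → Rd d → Rd d → ℂ)
    (T : (Rd d → ℂ) → (Rd d → ℂ) → Rd d → ℂ) : Prop :=
  ∀ f₁ f₂ f₃, BCS f₁ → BCS f₂ → BCS f₃ →
    Function.support f₁ ∩ Function.support f₂ ∩ Function.support f₃ = ∅ →
    ∫ x, T f₁ f₂ x * f₃ x = ∫ x, (∫ y, ∫ z, K x y z * f₁ y * f₂ z) * f₃ x

/-- Membership in `Σ`, the linear span of indicators of cubes. -/
def InSigma (f : Rd d → ℂ) : Prop :=
  ∃ (n : ℕ) (c : Fin n → ℂ) (Q : Fin n → Cube d),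
    f = fun x => ∑ i, c i * Set.indicator (Q i).set (fun _ => (1:ℂ)) x

/-- Kernel representation of a bilinear SIO, tested on `Σ`. -/
def HasSigmaKernel (K : Rd d → Rd d → Rd d → ℂ)
    (T : (Rd d → ℂ) → (Rd d → ℂ) → Rd d → ℂ) : Prop :=
  ∀ f₁ f₂ g, InSigma f₁ → InSigma f₂ → InSigma g →
    Function.support f₁ ∩ Function.support f₂ ∩ Function.support g = ∅ →
    ∫ x, T f₁ f₂ x * g x = ∫ x, (∫ y, ∫ z, K x y z * f₁ y * f₂ z) * g x

/-- Bilinearity (in the a.e. sense) on the class `L^p × L^q`. -/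
def BilinOn (p q : ℝ≥0∞) (T : (Rd d → ℂ) → (Rd d → ℂ) → Rd d → ℂ) : Prop :=
  (∀ f f' g, MemLp f p volume → MemLp f' p volume → MemLp g q volume →
      T (f + f') g =ᵐ[volume] T f g + T f' g) ∧
  (∀ (a : ℂ) f g, MemLp f p volume → MemLp g q volume →
      T (a • f) g =ᵐ[volume] a • T f g) ∧
  (∀ f g g', MemLp f p volume → MemLp g q volume → MemLp g' q volume →
      T f (g + g') =ᵐ[volume] T f g + T f g') ∧
  (∀ (a : ℂ) f g, MemLp f p volume → MemLp g q volume →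
      T f (a • g) =ᵐ[volume] a • T f g)

/-- Bilinearity (in the a.e. sense) on `Σ × Σ`. -/
def BilinOnSigma (T : (Rd d → ℂ) → (Rd d → ℂ) → Rd d → ℂ) : Prop :=
  (∀ f f' g, InSigma f → InSigma f' → InSigma g →
      T (f + f') g =ᵐ[volume] T f g + T f' g) ∧
  (∀ (a : ℂ) f g, InSigma f → InSigma g → T (a • f) g =ᵐ[volume] a • T f g) ∧
  (∀ f g g', InSigma f → InSigma g → InSigma g' →
      T f (g + g') =ᵐ[volume] T f g + T f g') ∧
  (∀ (a : ℂ) f g, InSigma f → InSigma g → T f (a • g) =ᵐ[volume] a • T f g)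

/-- Boundedness `L^p × L^q → L^σ` with constant `C`. -/
def BddOn (p q σ : ℝ≥0∞) (T : (Rd d → ℂ) → (Rd d → ℂ) → Rd d → ℂ) (C : ℝ) : Prop :=
  ∀ f g, MemLp f p volume → MemLp g q volume →
    eLpNorm (T f g) σ volume ≤
      ENNReal.ofReal C * (eLpNorm f p volume * eLpNorm g q volume)

/-- The first commutator `[b,T]_1(f,g) = b · T(f,g) - T(bf,g)`. -/
def comm1 (b : Rd d → ℂ) (T : (Rd d → ℂ) → (Rd d → ℂ) → Rd d → ℂ)
    (f g : Rd d → ℂ) : Rd d → ℂ :=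
  fun x => b x * T f g x - T (fun y => b y * f y) g x

/-- The truncation `T_ε` of a bilinear kernel. -/
def trunc (K : Rd d → Rd d → Rd d → ℂ) (ε : ℝ) (f g : Rd d → ℂ) (x : Rd d) : ℂ :=
  ∫ y, ∫ z, (if ε < max ‖x - y‖ ‖x - z‖ then K x y z else 0) * f y * g z

/-- The weak off-support testing condition `O^{∞,A}_{p,q,r}(b;K) ≤ C`. -/
def WeakTestBound (A p q r : ℝ) (K : Rd d → Rd d → Rd d → ℂ)
    (b : Rd d → ℂ) (C : ℝ) : Prop :=
  ∀ Q0 Q1 Q2 : Cube d, SepTriple A Q0 Q1 Q2 →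
    ∀ f₁ f₂ : Rd d → ℂ, Measurable f₁ → Measurable f₂ →
      (∀ y, ‖f₁ y‖ ≤ Set.indicator Q1.set (fun _ => (1:ℝ)) y) →
      (∀ z, ‖f₂ z‖ ≤ Set.indicator Q2.set (fun _ => (1:ℝ)) z) →
      ∃ F' : Set (Rd d), F' ⊆ Q0.set ∧ MeasurableSet F' ∧
        Q0.vol / 2 ≤ (volume F').toReal ∧
        ∀ f₀ : Rd d → ℂ, Measurable f₀ →
          (∀ x, ‖f₀ x‖ ≤ Set.indicator F' (fun _ => (1:ℝ)) x) →
          ‖Lam K b f₁ f₂ f₀‖ ≤ C * Q0.vol ^ (1 / p + 1 / q + (1 - 1 / r))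

/-- `‖[b,T]_1(f₁,f₂)‖_{L^{r,∞}} ≤ C' ‖f₁‖_{L^p} ‖f₂‖_{L^q}` on bounded compactly
supported functions, with the weak norm written out. -/
def WeakTypeCommBound (p q r : ℝ) (b : Rd d → ℂ)
    (T : (Rd d → ℂ) → (Rd d → ℂ) → Rd d → ℂ) (C' : ℝ) : Prop :=
  ∀ f₁ f₂, BCS f₁ → BCS f₂ → ∀ lam : ℝ, 0 < lam →
    ENNReal.ofReal lam * volume {x | lam < ‖comm1 b T f₁ f₂ x‖} ^ (1 / r) ≤
      ENNReal.ofReal C' * (eLpNorm f₁ (ENNReal.ofReal p) volume *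
        eLpNorm f₂ (ENNReal.ofReal q) volume)

/-- An `η`-sparse family with specified pairwise disjoint major subsets. -/
def IsSparseWith (η : ℝ) (S : Set (Cube d)) (E : Cube d → Set (Rd d)) : Prop :=
  (∀ Q ∈ S, E Q ⊆ Q.set ∧ MeasurableSet (E Q) ∧ η * Q.vol ≤ (volume (E Q)).toReal) ∧
  S.PairwiseDisjoint E

/-- An `η`-sparse family of cubes. -/
def IsSparse (η : ℝ) (S : Set (Cube d)) : Prop := ∃ E, IsSparseWith η S E

/-- Stopping children: the maximal cubes `P ∈ D`, `P ⊆ Q'`, with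
`⟨|f|⟩_P > 2⟨|f|⟩_{Q'}`. -/
def stopChildren (D : Set (Cube d)) (f : Rd d → ℂ) (Q' : Cube d) : Set (Cube d) :=
  {P | P ∈ D ∧ P.set ⊆ Q'.set ∧
      2 * cubeAvg Q' (fun x => ‖f x‖) < cubeAvg P (fun x => ‖f x‖) ∧
      ∀ P' ∈ D, P'.set ⊆ Q'.set → P.set ⊆ P'.set → P'.set ≠ P.set →
        cubeAvg P' (fun x => ‖f x‖) ≤ 2 * cubeAvg Q' (fun x => ‖f x‖)}

/-- The generations of the principal stopping family. -/
def stopGen (D : Set (Cube d)) (f : Rd d → ℂ) (Q : Cube d) : ℕ → Set (Cube d)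
  | 0 => {Q}
  | k + 1 => ⋃ P ∈ stopGen D f Q k, stopChildren D f P

/-- The principal stopping family. -/
def stopFam (D : Set (Cube d)) (f : Rd d → ℂ) (Q : Cube d) : Set (Cube d) :=
  ⋃ k, stopGen D f Q k

/-- `P = Π_S Q'` is the minimal cube of `S` containing `Q'`. -/
def IsMinStopAbove (S : Set (Cube d)) (Q' P : Cube d) : Prop :=
  P ∈ S ∧ Q'.set ⊆ P.set ∧ ∀ P' ∈ S, Q'.set ⊆ P'.set → P.set ⊆ P'.set

/-- The martingale difference `Δ_{Q'} f`. -/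
def deltaQ (D : Set (Cube d)) (f : Rd d → ℂ) (Q' : Cube d) (x : Rd d) : ℂ :=
  ∑' P : {P : Cube d // P ∈ D ∧ P.set ⊆ Q'.set ∧ 2 * P.side = Q'.side},
    Set.indicator (P.1).set (fun _ => cubeAvgC P.1 f - cubeAvgC Q' f) x

/-- The piece `f_P = ∑_{Q' : Π_S Q' = P} Δ_{Q'} f` of the stopping decomposition. -/
def stopPiece (D : Set (Cube d)) (f : Rd d → ℂ) (Q P : Cube d) (x : Rd d) : ℂ :=
  ∑' Q' : {Q' : Cube d // Q' ∈ D ∧ Q'.set ⊆ Q.set ∧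
      IsMinStopAbove (stopFam D f Q) Q' P},
    deltaQ D f Q'.1 x

/-- The Hardy–Littlewood maximal function (with values in `ℝ≥0∞`). -/
def HLMax (f : Rd d → ℂ) (x : Rd d) : ℝ≥0∞ :=
  ⨆ (r : ℝ) (_ : 0 < r),
    (volume (Metric.ball x r))⁻¹ * ∫⁻ y in Metric.ball x r, (‖f y‖₊ : ℝ≥0∞)

/-- The (pointwise) sup norm of a function. -/
def supNorm (f : Rd d → ℂ) : ℝ := ⨆ x, ‖f x‖

/-- The exponent `r'` with `1/r' = 1 - 1/r`, as an element of `ℝ≥0∞`. -/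
def rPrimeE (r : ℝ) : ℝ≥0∞ := if r = 1 then ⊤ else ENNReal.ofReal (r / (r - 1))

/-- The finite-family off-support testing condition `O^{Σ,A}_{p,q,r}(b;K) ≤ C`. -/
def SigmaTestBound (A p q r : ℝ) (K : Rd d → Rd d → Rd d → ℂ)
    (b : Rd d → ℂ) (C : ℝ) : Prop :=
  ∀ (N : ℕ) (Q0 Q1 Q2 : Fin (N + 1) → Cube d) (f₀ f₁ f₂ : Fin (N + 1) → Rd d → ℂ),
    (∀ k, SepTriple A (Q0 k) (Q1 k) (Q2 k)) →
    (∀ k, Measurable (f₀ k) ∧ Measurable (f₁ k) ∧ Measurable (f₂ k)) →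
    (∀ k x, ‖f₀ k x‖ ≤ Set.indicator (Q0 k).set (fun _ => (1:ℝ)) x) →
    (∀ k y, ‖f₁ k y‖ ≤ Set.indicator (Q1 k).set (fun _ => (1:ℝ)) y) →
    (∀ k z, ‖f₂ k z‖ ≤ Set.indicator (Q2 k).set (fun _ => (1:ℝ)) z) →
    (∀ k, 0 < volume (Function.support (f₀ k)) ∧
        0 < volume (Function.support (f₁ k)) ∧
        0 < volume (Function.support (f₂ k))) →
    ∑ k, ‖Lam K b (f₁ k) (f₂ k) (f₀ k)‖ ≤
      C * ((eLpNorm (fun y => ∑ k, supNorm (f₁ k) *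
              Set.indicator (Function.support (f₁ k)) (fun _ => (1:ℝ)) y)
            (ENNReal.ofReal p) volume).toReal
        * (eLpNorm (fun z => ∑ k, supNorm (f₂ k) *
              Set.indicator (Function.support (f₂ k)) (fun _ => (1:ℝ)) z)
            (ENNReal.ofReal q) volume).toReal
        * (eLpNorm (fun x => ∑ k, supNorm (f₀ k) *
              Set.indicator (Function.support (f₀ k)) (fun _ => (1:ℝ)) x)
            (rPrimeE r) volume).toReal)


/-! ### Auxiliary lemmas -/

lemma IsModulus.tendsto_Ici {ω : ℝ → ℝ} (hω : IsModulus ω) :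
    Filter.Tendsto ω (nhdsWithin 0 (Set.Ici 0)) (nhds 0) := by
  rw [show Set.Ici (0:ℝ) = insert 0 (Set.Ioi 0) by
      ext x; simp [le_iff_lt_or_eq, eq_comm],
    nhdsWithin_insert, Filter.tendsto_sup]
  constructor
  · refine Filter.tendsto_pure_left.mpr fun s hs => ?_
    rw [hω.1]; exact mem_of_mem_nhds hs
  · exact hω.2.2.2.2

lemma IsModulus.nsmul_le {ω : ℝ → ℝ} (hω : IsModulus ω) (n : ℕ) (t : ℝ) (ht : 0 ≤ t) :
    ω (n * t) ≤ n * ω t := by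
  induction n with
  | zero => simp [hω.1]
  | succ n ih =>
    have h : ((n:ℝ) + 1) * t = n * t + t := by ring
    push_cast
    rw [h]
    calc ω (n * t + t) ≤ ω (n * t) + ω t := hω.2.2.2.1 _ _ (by positivity) ht
      _ ≤ n * ω t + ω t := by linarith
      _ = (n + 1) * ω t := by ring

lemma Cube.set_eq (Q : Cube d) : Q.set =
    (MeasurableEquiv.toLp 2 (Fin d → ℝ)).symm ⁻¹'
      (Set.univ.pi fun i => Set.Ico (Q.center i - Q.side / 2) (Q.center i + Q.side / 2)) := by
  ext x
  simp [Cube.set, Set.mem_pi, MeasurableEquiv.toLp_symm_apply, Set.mem_Ico]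

lemma Cube.measurableSet_set (Q : Cube d) : MeasurableSet Q.set := by
  rw [Cube.set_eq]
  exact (MeasurableEquiv.measurable _) (MeasurableSet.univ_pi fun i => measurableSet_Ico)

lemma Cube.volume_set (Q : Cube d) : volume Q.set = ENNReal.ofReal (Q.side ^ d) := by
  rw [Cube.set_eq,
    (EuclideanSpace.volume_preserving_symm_measurableEquiv_toLp (Fin d)).measure_preimage
      ((MeasurableSet.univ_pi fun i => measurableSet_Ico).nullMeasurableSet)]
  rw [volume_pi_pi]
  simp [Real.volume_Ico]
  exact (ENNReal.ofReal_pow Q.side_pos.le d).symm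

lemma Cube.center_mem (Q : Cube d) : Q.center ∈ Q.set := by
  intro i
  have := Q.side_pos
  constructor <;> nlinarith

lemma Cube.norm_sub_le {Q : Cube d} {u v : Rd d} (hu : u ∈ Q.set) (hv : v ∈ Q.set) :
    ‖u - v‖ ≤ d * Q.side := by
  have hs := Q.side_pos
  have h : ∀ i, ‖(u - v) i‖ ≤ Q.side := by
    intro i
    have h1 := hu i; have h2 := hv i
    have h3 : (u - v) i = u i - v i := rfl
    rw [h3, Real.norm_eq_abs, abs_le]
    constructor <;> nlinarith [h1.1, h1.2, h2.1, h2.2]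
  have h2 : ‖u - v‖ ≤ Real.sqrt (∑ _i : Fin d, Q.side ^ 2) := by
    rw [EuclideanSpace.norm_eq]
    apply Real.sqrt_le_sqrt
    apply Finset.sum_le_sum
    intro i _
    have := h i
    have h0 : (0:ℝ) ≤ ‖(u - v) i‖ := norm_nonneg _
    nlinarith
  calc ‖u - v‖ ≤ Real.sqrt (∑ _i : Fin d, Q.side ^ 2) := h2
    _ = Real.sqrt (d * Q.side ^ 2) := by simp [Finset.sum_const, mul_comm]
    _ ≤ Real.sqrt ((d * Q.side) ^ 2) := by
        apply Real.sqrt_le_sqrt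
        have h4 : (0:ℝ) ≤ d := Nat.cast_nonneg d
        have hd2 : (d:ℝ) ≤ (d:ℝ)^2 := by
          exact_mod_cast Nat.le_self_pow two_ne_zero d
        nlinarith [sq_nonneg Q.side]
    _ = d * Q.side := Real.sqrt_sq (by positivity)

/-- geometric: perturbed triples keep large pairwise sums -/
lemma sums_ge {x0 c1 x2 u v w : Rd d} {r δ : ℝ}
    (hM : r ≤ max (max ‖x0 - c1‖ ‖x0 - x2‖) ‖c1 - x2‖)
    (hu : ‖u - x0‖ ≤ δ) (hv : ‖v - c1‖ ≤ δ) (hw : ‖w - x2‖ ≤ δ) :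
    r - 2 * δ ≤ ‖u - v‖ + ‖u - w‖ ∧ r - 2 * δ ≤ ‖v - u‖ + ‖v - w‖ ∧
      r - 2 * δ ≤ ‖w - u‖ + ‖w - v‖ := by
  simp only [← dist_eq_norm] at *
  have t1 : dist x0 c1 ≤ dist x0 u + dist u v + dist v c1 := dist_triangle4 _ _ _ _
  have t2 : dist x0 x2 ≤ dist x0 u + dist u w + dist w x2 := dist_triangle4 _ _ _ _
  have t3 : dist c1 x2 ≤ dist c1 v + dist v w + dist w x2 := dist_triangle4 _ _ _ _
  have c1u : dist x0 u = dist u x0 := dist_comm _ _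
  have c2u : dist c1 v = dist v c1 := dist_comm _ _
  have tvw : dist v w ≤ dist v u + dist u w := dist_triangle _ _ _
  have tuv : dist u v ≤ dist u w + dist w v := dist_triangle _ _ _
  have tuw : dist u w ≤ dist u v + dist v w := dist_triangle _ _ _
  have s1 : dist u v = dist v u := dist_comm _ _
  have s2 : dist u w = dist w u := dist_comm _ _
  have s3 : dist v w = dist w v := dist_comm _ _
  rcases le_max_iff.mp hM with h | h
  · rcases le_max_iff.mp h with h' | h'
    · refine ⟨by linarith, by linarith, by linarith⟩
    · refine ⟨by linarith, by linarith, by linarith⟩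
  · refine ⟨by linarith, by linarith, by linarith⟩

section Reg
variable {K : Rd d → Rd d → Rd d → ℂ} {ω : ℝ → ℝ}
variable (hreg : RegEstimate d K ω) (hω : IsModulus ω)

include hω in
lemma reg_clean {G : Rd d → Rd d → Rd d → ℂ}
    (hG : ∀ x x' y z : Rd d, ‖x - x'‖ ≤ (1 / 2) * max ‖x - y‖ ‖x - z‖ →
      ‖G x y z - G x' y z‖ ≤
        ω (‖x - x'‖ / (‖x - y‖ + ‖x - z‖)) / (‖x - y‖ + ‖x - z‖) ^ (2 * d))
    {R : ℝ} (hR : 0 < R) {x x' y z : Rd d}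
    (hsum : R ≤ ‖x - y‖ + ‖x - z‖) (hxx : ‖x - x'‖ ≤ R / 4) :
    ‖G x y z - G x' y z‖ ≤ ω (‖x - x'‖ * (2 / R)) * (2 / R) ^ (2 * d) := by
  have hmax : R / 2 ≤ max ‖x - y‖ ‖x - z‖ := by
    rcases le_total ‖x - y‖ ‖x - z‖ with h | h
    · have := le_max_right ‖x - y‖ ‖x - z‖; simp [max_eq_right h] at *; linarith
    · have := le_max_left ‖x - y‖ ‖x - z‖; simp [max_eq_left h] at *; linarith
  have hcond : ‖x - x'‖ ≤ (1 / 2) * max ‖x - y‖ ‖x - z‖ := by linarith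
  have hS : 0 < ‖x - y‖ + ‖x - z‖ := lt_of_lt_of_le hR hsum
  have h1 : ‖x - x'‖ / (‖x - y‖ + ‖x - z‖) ≤ ‖x - x'‖ * (2 / R) := by
    rw [div_eq_mul_inv]
    apply mul_le_mul_of_nonneg_left _ (norm_nonneg _)
    rw [inv_le_iff_one_le_mul₀ hS]
    rw [div_mul_eq_mul_div, le_div_iff₀ hR]
    linarith
  have hmono : ω (‖x - x'‖ / (‖x - y‖ + ‖x - z‖)) ≤ ω (‖x - x'‖ * (2 / R)) :=
    hω.2.2.1 (Set.mem_Ici.2 (by positivity)) (Set.mem_Ici.2 (by positivity)) h1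
  have h2 : (1 : ℝ) / (‖x - y‖ + ‖x - z‖) ^ (2 * d) ≤ (2 / R) ^ (2 * d) := by
    rw [div_le_iff₀ (by positivity), ← mul_pow]
    apply one_le_pow₀
    rw [div_mul_eq_mul_div, le_div_iff₀ hR]
    linarith
  calc ‖G x y z - G x' y z‖ ≤
      ω (‖x - x'‖ / (‖x - y‖ + ‖x - z‖)) / (‖x - y‖ + ‖x - z‖) ^ (2 * d) :=
        hG x x' y z hcond
    _ ≤ ω (‖x - x'‖ * (2 / R)) / (‖x - y‖ + ‖x - z‖) ^ (2 * d) := by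
        apply div_le_div_of_nonneg_right hmono (by positivity) |>.trans_eq rfl
    _ ≤ ω (‖x - x'‖ * (2 / R)) * (2 / R) ^ (2 * d) := by
        rw [div_eq_mul_one_div]
        exact mul_le_mul_of_nonneg_left h2 (hω.2.1 _)

include hreg hω in
lemma reg1 {R : ℝ} (hR : 0 < R) {x x' y z : Rd d}
    (hsum : R ≤ ‖x - y‖ + ‖x - z‖) (hxx : ‖x - x'‖ ≤ R / 4) :
    ‖K x y z - K x' y z‖ ≤ ω (‖x - x'‖ * (2 / R)) * (2 / R) ^ (2 * d) :=
  reg_clean hω (hreg K (by simp)) hR hsum hxx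

include hreg hω in
lemma reg2 {R : ℝ} (hR : 0 < R) {x y y' z : Rd d}
    (hsum : R ≤ ‖y - x‖ + ‖y - z‖) (hyy : ‖y - y'‖ ≤ R / 4) :
    ‖K x y z - K x y' z‖ ≤ ω (‖y - y'‖ * (2 / R)) * (2 / R) ^ (2 * d) :=
  reg_clean hω (hreg (fun x y z => K y x z) (by simp)) hR hsum hyy

include hreg hω in
lemma reg3 {R : ℝ} (hR : 0 < R) {x y z z' : Rd d}
    (hsum : R ≤ ‖z - y‖ + ‖z - x‖) (hzz : ‖z - z'‖ ≤ R / 4) :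
    ‖K x y z - K x y z'‖ ≤ ω (‖z - z'‖ * (2 / R)) * (2 / R) ^ (2 * d) :=
  reg_clean hω (hreg (fun x y z => K z y x) (by simp)) hR hsum hzz

end Reg

lemma integrableOn_of_continuousOn_bdd {E : Type*} [NormedAddCommGroup E]
    {f : Rd d → E} {s : Set (Rd d)} (hms : MeasurableSet s) (hvol : volume s < ∞)
    (hc : ContinuousOn f s) {M : ℝ} (hM : ∀ x ∈ s, ‖f x‖ ≤ M) :
    IntegrableOn f s volume :=
  ⟨hc.aestronglyMeasurable hms,
    HasFiniteIntegral.restrict_of_bounded _ hvol ((ae_restrict_iff' hms).2 (ae_of_all _ hM))⟩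

lemma contOn_of_modulus {ω : ℝ → ℝ} (hω : IsModulus ω) {E : Type*} [NormedAddCommGroup E]
    {f : Rd d → E} {s : Set (Rd d)} {R C : ℝ} (hR : 0 < R)
    (hmod : ∀ p ∈ s, ∀ q ∈ s, ‖p - q‖ ≤ R / 4 →
      ‖f p - f q‖ ≤ ω (‖p - q‖ * (2 / R)) * C) :
    ContinuousOn f s := by
  intro q hq
  have hev : ∀ᶠ p in nhdsWithin q s, ‖f p - f q‖ ≤ ω (‖p - q‖ * (2 / R)) * C := by
    filter_upwards [self_mem_nhdsWithin,
      mem_nhdsWithin_of_mem_nhds (Metric.ball_mem_nhds q (by positivity : (0:ℝ) < R / 4))]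
      with p hp hball
    exact hmod p hp q hq (by rw [← dist_eq_norm]; exact le_of_lt hball)
  have h0 : Tendsto (fun p => ‖p - q‖ * (2 / R)) (nhdsWithin q s) (nhdsWithin 0 (Set.Ici 0)) := by
    apply tendsto_nhdsWithin_of_tendsto_nhds_of_eventually_within
    · have h1 : Tendsto (fun p : Rd d => ‖p - q‖ * (2 / R)) (nhds q) (nhds (‖q - q‖ * (2 / R))) :=
        (((continuous_id.sub continuous_const).norm).mul continuous_const).tendsto q
      simpa using h1.mono_left nhdsWithin_le_nhds
    · exact Eventually.of_forall fun p => Set.mem_Ici.2 (by positivity)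
  have hg : Tendsto (fun p => ω (‖p - q‖ * (2 / R)) * C) (nhdsWithin q s) (nhds 0) := by
    have h2 := (hω.tendsto_Ici.comp h0).mul_const C
    simpa using h2
  have hf0 : Tendsto (fun p => f p - f q) (nhdsWithin q s) (nhds 0) :=
    squeeze_zero_norm' hev hg
  have h3 : Tendsto f (nhdsWithin q s) (nhds (f q)) := by
    have h4 := hf0.add_const (f q)
    simpa using h4
  exact h3

section Core
variable {ω : ℝ → ℝ} {K : Rd d → Rd d → Rd d → ℂ}

/-- Core integral estimates over a product of two sets, for a fixed `y`. -/
lemma core_int (hω : IsModulus ω)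
    {s0 s2 : Set (Rd d)} (hms0 : MeasurableSet s0) (hms2 : MeasurableSet s2)
    (hv0 : volume s0 < ∞) (hv2 : volume s2 < ∞)
    {y : Rd d} {k0 : ℂ} {R B M CR : ℝ} (hR : 0 < R)
    (hB : 0 ≤ B) (hM : 0 ≤ M) (hCR : 0 ≤ CR)
    (hosc : ∀ x ∈ s0, ∀ z ∈ s2, ‖K x y z - k0‖ ≤ B)
    (hsz : ∀ x ∈ s0, ∀ z ∈ s2, ‖K x y z‖ ≤ M)
    (hcontz : ∀ x ∈ s0, ContinuousOn (fun z => K x y z) s2)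
    (hmod1 : ∀ p ∈ s0, ∀ q ∈ s0, ‖p - q‖ ≤ R / 4 → ∀ z ∈ s2,
      ‖K p y z - K q y z‖ ≤ ω (‖p - q‖ * (2 / R)) * CR) :
    (∫ x in s0, ∫ z in s2, ‖K x y z - k0‖) ≤ B * ((volume s0).toReal * (volume s2).toReal) ∧
    ‖∫ x in s0, ∫ z in s2, K x y z‖ ≤ ∫ x in s0, ∫ z in s2, ‖K x y z‖ ∧
    (∫ x in s0, ∫ z in s2, ‖K x y z‖) ≤ M * ((volume s0).toReal * (volume s2).toReal) ∧
    ‖(∫ x in s0, ∫ z in s2, K x y z) -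
        ((volume s0).toReal * (volume s2).toReal) • k0‖ ≤
      B * ((volume s0).toReal * (volume s2).toReal) := by
  set v0 := (volume s0).toReal with hv0d
  set v2 := (volume s2).toReal with hv2d
  have hv0n : 0 ≤ v0 := ENNReal.toReal_nonneg
  have hv2n : 0 ≤ v2 := ENNReal.toReal_nonneg
  -- inner integrabilities
  have IntZ : ∀ x ∈ s0, IntegrableOn (fun z => K x y z) s2 volume := fun x hx =>
    integrableOn_of_continuousOn_bdd hms2 hv2 (hcontz x hx) (hsz x hx)
  have IntZB : ∀ x ∈ s0, IntegrableOn (fun z => ‖K x y z - k0‖) s2 volume := fun x hx =>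
    integrableOn_of_continuousOn_bdd hms2 hv2
      (((hcontz x hx).sub continuousOn_const).norm)
      (fun z hz => by simpa using hosc x hx z hz)
  have IntZN : ∀ x ∈ s0, IntegrableOn (fun z => ‖K x y z‖) s2 volume := fun x hx =>
    integrableOn_of_continuousOn_bdd hms2 hv2 ((hcontz x hx).norm)
      (fun z hz => by simpa using hsz x hx z hz)
  -- outer continuity
  have contK : ContinuousOn (fun x => ∫ z in s2, K x y z) s0 := by
    apply contOn_of_modulus hω hR (C := CR * v2)
    intro p hp q hq hpq
    have h1 : (∫ z in s2, K p y z) - (∫ z in s2, K q y z)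
        = ∫ z in s2, (K p y z - K q y z) := (integral_sub (IntZ p hp) (IntZ q hq)).symm
    rw [h1]
    calc ‖∫ z in s2, (K p y z - K q y z)‖
        ≤ (ω (‖p - q‖ * (2 / R)) * CR) * v2 := by
          apply norm_setIntegral_le_of_norm_le_const hv2
            (fun z hz => hmod1 p hp q hq hpq z hz)
      _ = ω (‖p - q‖ * (2 / R)) * (CR * v2) := by ring
  have contN : ContinuousOn (fun x => ∫ z in s2, ‖K x y z‖) s0 := by
    apply contOn_of_modulus hω hR (C := CR * v2)
    intro p hp q hq hpq
    have h1 : (∫ z in s2, ‖K p y z‖) - (∫ z in s2, ‖K q y z‖)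
        = ∫ z in s2, (‖K p y z‖ - ‖K q y z‖) := (integral_sub (IntZN p hp) (IntZN q hq)).symm
    rw [h1]
    calc ‖∫ z in s2, (‖K p y z‖ - ‖K q y z‖)‖
        ≤ (ω (‖p - q‖ * (2 / R)) * CR) * v2 := by
          apply norm_setIntegral_le_of_norm_le_const hv2
            (fun z hz => by
              rw [Real.norm_eq_abs]
              exact (abs_norm_sub_norm_le _ _).trans (hmod1 p hp q hq hpq z hz))
      _ = ω (‖p - q‖ * (2 / R)) * (CR * v2) := by ring
  have contB : ContinuousOn (fun x => ∫ z in s2, ‖K x y z - k0‖) s0 := by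
    apply contOn_of_modulus hω hR (C := CR * v2)
    intro p hp q hq hpq
    have h1 : (∫ z in s2, ‖K p y z - k0‖) - (∫ z in s2, ‖K q y z - k0‖)
        = ∫ z in s2, (‖K p y z - k0‖ - ‖K q y z - k0‖) :=
      (integral_sub (IntZB p hp) (IntZB q hq)).symm
    rw [h1]
    calc ‖∫ z in s2, (‖K p y z - k0‖ - ‖K q y z - k0‖)‖
        ≤ (ω (‖p - q‖ * (2 / R)) * CR) * v2 := by
          apply norm_setIntegral_le_of_norm_le_const hv2
            (fun z hz => by
              rw [Real.norm_eq_abs]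
              refine (abs_norm_sub_norm_le _ _).trans ?_
              rw [sub_sub_sub_cancel_right]
              exact hmod1 p hp q hq hpq z hz)
      _ = ω (‖p - q‖ * (2 / R)) * (CR * v2) := by ring
  -- outer bounds
  have bndK : ∀ x ∈ s0, ‖∫ z in s2, K x y z‖ ≤ M * v2 := fun x hx =>
    norm_setIntegral_le_of_norm_le_const hv2 (hsz x hx)
  have bndN : ∀ x ∈ s0, ‖∫ z in s2, ‖K x y z‖‖ ≤ M * v2 := fun x hx =>
    norm_setIntegral_le_of_norm_le_const hv2
      (fun z hz => by simpa using hsz x hx z hz)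
  have bndB : ∀ x ∈ s0, ‖∫ z in s2, ‖K x y z - k0‖‖ ≤ B * v2 := fun x hx =>
    norm_setIntegral_le_of_norm_le_const hv2
      (fun z hz => by simpa using hosc x hx z hz)
  -- outer integrabilities
  have IntXK : IntegrableOn (fun x => ∫ z in s2, K x y z) s0 volume :=
    integrableOn_of_continuousOn_bdd hms0 hv0 contK bndK
  have IntXN : IntegrableOn (fun x => ∫ z in s2, ‖K x y z‖) s0 volume :=
    integrableOn_of_continuousOn_bdd hms0 hv0 contN bndN
  have IntXB : IntegrableOn (fun x => ∫ z in s2, ‖K x y z - k0‖) s0 volume :=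
    integrableOn_of_continuousOn_bdd hms0 hv0 contB bndB
  have conc1 : (∫ x in s0, ∫ z in s2, ‖K x y z - k0‖) ≤ B * (v0 * v2) := by
    calc (∫ x in s0, ∫ z in s2, ‖K x y z - k0‖) ≤ ∫ _x in s0, B * v2 := by
          apply setIntegral_mono_on IntXB (integrableOn_const hv0.ne) hms0
          intro x hx
          exact (le_abs_self _).trans (by rw [← Real.norm_eq_abs]; exact bndB x hx)
      _ = v0 * (B * v2) := by rw [setIntegral_const]; simp [smul_eq_mul, hv0d, measureReal_def]
      _ = B * (v0 * v2) := by ring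
  refine ⟨conc1, ?_, ?_, ?_⟩
  · calc ‖∫ x in s0, ∫ z in s2, K x y z‖ ≤ ∫ x in s0, ‖∫ z in s2, K x y z‖ :=
          norm_integral_le_integral_norm _
      _ ≤ ∫ x in s0, ∫ z in s2, ‖K x y z‖ := by
          apply setIntegral_mono_on IntXK.norm IntXN hms0
          intro x hx
          exact norm_integral_le_integral_norm _
  · calc (∫ x in s0, ∫ z in s2, ‖K x y z‖) ≤ ∫ _x in s0, M * v2 := by
          apply setIntegral_mono_on IntXN (integrableOn_const hv0.ne) hms0
          intro x hx
          exact (le_abs_self _).trans (by rw [← Real.norm_eq_abs]; exact bndN x hx)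
      _ = v0 * (M * v2) := by rw [setIntegral_const]; simp [smul_eq_mul, hv0d, measureReal_def]
      _ = M * (v0 * v2) := by ring
  · have hgD : ∀ x ∈ s0, (∫ z in s2, (K x y z - k0)) = (∫ z in s2, K x y z) - v2 • k0 := by
      intro x hx
      rw [integral_sub (IntZ x hx) (integrableOn_const hv2.ne), setIntegral_const]
      rfl
    have IntXD : IntegrableOn (fun x => ∫ z in s2, (K x y z - k0)) s0 volume := by
      have h := IntXK.sub
        (integrableOn_const hv0.ne : IntegrableOn (fun _ => v2 • k0) s0 volume)
      exact IntegrableOn.congr_fun h (fun x hx => (hgD x hx).symm) hms0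
    have key : (∫ x in s0, ∫ z in s2, (K x y z - k0))
        = (∫ x in s0, ∫ z in s2, K x y z) - (v0 * v2) • k0 := by
      rw [setIntegral_congr_fun hms0 hgD,
        integral_sub IntXK (integrableOn_const hv0.ne), setIntegral_const,
        smul_smul]
      rfl
    rw [← key]
    calc ‖∫ x in s0, ∫ z in s2, (K x y z - k0)‖
        ≤ ∫ x in s0, ‖∫ z in s2, (K x y z - k0)‖ := norm_integral_le_integral_norm _
      _ ≤ ∫ x in s0, ∫ z in s2, ‖K x y z - k0‖ := by
          apply setIntegral_mono_on IntXD.norm IntXB hms0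
          intro x hx
          exact norm_integral_le_integral_norm _
      _ ≤ B * (v0 * v2) := conc1

end Core


set_option maxHeartbeats 1000000 in
/-- The bootstrap proposition for non-degenerate kernels satisfying
the size and `ω`-regularity estimates. -/
theorem statement1 (d : ℕ) (hd : 1 ≤ d) (K : Rd d → Rd d → Rd d → ℂ)
    (CK c : ℝ) (hc : 0 < c) (ω : ℝ → ℝ)
    (hsize : SizeEstimate d K CK) (hω : IsModulus ω)
    (hreg : RegEstimate d K ω) (hnd : NonDegenerate d K c) :
    ∃ c₀ C₀ A₁ : ℝ, 0 < c₀ ∧ c₀ ≤ C₀ ∧ 3 ≤ A₁ ∧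
      ∀ A : ℝ, A₁ ≤ A →
      ∀ Q1 : Cube d, ∀ D0 D2 : Set (Cube d),
        IsDyadicGrid D0 → IsDyadicGrid D2 →
        ∃ Q0 ∈ D0, ∃ Q2 ∈ D2, ∃ x0 ∈ Q0.set, ∃ x2 ∈ Q2.set,
          -- (i) separation and size of the cubes
          (c₀ * (A * Q1.side) ≤ max ‖x0 - Q1.center‖ ‖x2 - Q1.center‖ ∧
            max ‖x0 - Q1.center‖ ‖x2 - Q1.center‖ ≤ C₀ * (A * Q1.side) ∧
            c₀ * Q1.side ≤ Q0.side ∧ Q0.side ≤ C₀ * Q1.side ∧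
            c₀ * Q1.side ≤ Q2.side ∧ Q2.side ≤ C₀ * Q1.side) ∧
          -- (ii) size of the kernel at the distinguished points
          (c₀ / (A ^ (2 * d) * Q1.vol ^ 2) ≤ ‖K x0 Q1.center x2‖ ∧
            ‖K x0 Q1.center x2‖ ≤ C₀ / (A ^ (2 * d) * Q1.vol ^ 2)) ∧
          -- (iii) oscillation estimate
          (∀ y ∈ Q1.set,
            (∫ x in Q0.set, ∫ z in Q2.set, ‖K x y z - K x0 Q1.center x2‖) ≤
              C₀ * ω A⁻¹ / A ^ (2 * d)) ∧
          -- (iv) size of the integrals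
          (∀ y ∈ Q1.set,
            c₀ / A ^ (2 * d) ≤ ‖∫ x in Q0.set, ∫ z in Q2.set, K x y z‖ ∧
            ‖∫ x in Q0.set, ∫ z in Q2.set, K x y z‖ ≤
              ∫ x in Q0.set, ∫ z in Q2.set, ‖K x y z‖ ∧
            (∫ x in Q0.set, ∫ z in Q2.set, ‖K x y z‖) ≤ C₀ / A ^ (2 * d)) := by
  classical
  have hd1 : (1:ℝ) ≤ (d:ℝ) := by exact_mod_cast hd
  have h2d0 : 2 * d ≠ 0 := by omega
  have tri : ∀ a b e : Rd d, max (max ‖a - b‖ ‖a - e‖) ‖b - e‖ ≤ ‖a - b‖ + ‖a - e‖ := by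
    intro a b e
    have h := dist_triangle b a e
    simp only [dist_eq_norm] at h
    have h1 : ‖b - a‖ = ‖a - b‖ := norm_sub_rev _ _
    have n1 := norm_nonneg (a - e); have n2 := norm_nonneg (a - b)
    exact max_le (max_le (by linarith only [n1, n2]) (by linarith only [n1, n2]))
      (by linarith only [h, h1])
  -- `CK` is positive and at least `c`
  have hCKc : c ≤ CK ∧ 0 < CK := by
    obtain ⟨xw, zw, hw1, hw2⟩ := hnd.1 0 1 one_pos
    have hne : ¬(xw = 0 ∧ (0:Rd d) = zw) := by
      rintro ⟨rfl, h2⟩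
      rw [← h2] at hw1
      simp at hw1
      linarith only [hw1]
    have hsum : 1 < ‖xw - 0‖ + ‖xw - zw‖ := lt_of_lt_of_le hw1 (tri _ _ _)
    have hs := hsize xw 0 zw hne
    have hKw : c ≤ ‖K xw 0 zw‖ := by simpa using hw2
    have hpow : 1 ≤ (‖xw - 0‖ + ‖xw - zw‖) ^ (2*d) := one_le_pow₀ hsum.le
    have hpos : 0 < (‖xw - 0‖ + ‖xw - zw‖) ^ (2*d) := by positivity
    have h2 : c * (‖xw - 0‖ + ‖xw - zw‖) ^ (2*d) ≤ CK := by
      rw [← le_div_iff₀ hpos]; exact hKw.trans hs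
    constructor
    · nlinarith only [h2, hpow, hc]
    · nlinarith only [h2, hpow, hc]
  obtain ⟨hcCK, hCK⟩ := hCKc
  set C₁ := (CK / c) ^ (((2 * d : ℕ) : ℝ))⁻¹ with hC₁def
  have hC₁pow : C₁ ^ (2 * d) = CK / c := Real.rpow_inv_natCast_pow (by positivity) h2d0
  have hC₁0 : 0 < C₁ := Real.rpow_pos_of_pos (by positivity) _
  have hroot : ∀ S ρ : ℝ, 0 < ρ → 0 ≤ S → c / ρ ^ (2*d) ≤ CK / S ^ (2*d) → S ≤ C₁ * ρ := by
    intro S ρ hρ hS h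
    rcases eq_or_lt_of_le hS with h0 | h0
    · rw [← h0]; positivity
    have hrp : 0 < ρ ^ (2*d) := by positivity
    have hSp : 0 < S ^ (2*d) := by positivity
    have h1 : c * S ^ (2*d) ≤ CK * ρ ^ (2*d) := by
      rw [div_le_div_iff₀ hrp hSp] at h
      linarith only [h]
    have h2 : S ^ (2*d) ≤ (C₁ * ρ) ^ (2*d) := by
      rw [mul_pow, hC₁pow, div_mul_eq_mul_div, le_div_iff₀ hc]
      linarith only [h1]
    exact le_of_pow_le_pow_left₀ h2d0 (by positivity) h2
  set Cω := 24 * (d:ℝ) * 8 ^ (2*d) with hCωdef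
  have h8pow : (0:ℝ) < 8 ^ (2*d) := by positivity
  have hCω : 0 < Cω := by rw [hCωdef]; nlinarith only [h8pow, hd1]
  set c₀ := min (1/2 : ℝ) (c/2) with hc₀def
  have hc₀ : 0 < c₀ := lt_min (by norm_num) (by linarith only [hc])
  have hc₀half : c₀ ≤ 1/2 := min_le_left _ _
  have hc₀c : c₀ ≤ c/2 := min_le_right _ _
  have h4pow : (0:ℝ) < 4 ^ (2*d) := by positivity
  set C₀ := 2 * C₁ + 2 + CK + Cω + 4 ^ (2*d) * CK with hC₀def
  have hC₁C₀ : C₁ ≤ C₀ := by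
    rw [hC₀def]; nlinarith only [hC₁0, hCK, hCω, mul_pos h4pow hCK]
  have hC₀2 : 2 ≤ C₀ := by
    rw [hC₀def]; nlinarith only [hC₁0, hCK, hCω, mul_pos h4pow hCK]
  have hCKC₀ : CK ≤ C₀ := by
    rw [hC₀def]; nlinarith only [hC₁0, hCK, hCω, mul_pos h4pow hCK]
  have hCωC₀ : Cω ≤ C₀ := by
    rw [hC₀def]; nlinarith only [hC₁0, hCK, hCω, mul_pos h4pow hCK]
  have h4CKC₀ : 4 ^ (2*d) * CK ≤ C₀ := by
    rw [hC₀def]; nlinarith only [hC₁0, hCK, hCω, mul_pos h4pow hCK]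
  have hc₀C₀ : c₀ ≤ C₀ := by linarith only [hc₀half, hC₀2]
  -- smallness of the modulus
  have htends := hω.2.2.2.2
  rw [Metric.tendsto_nhdsWithin_nhds] at htends
  obtain ⟨δ, hδ0, hδ⟩ := htends (c / (2 * Cω)) (by positivity)
  have hsmall : ∀ t : ℝ, 0 < t → t < δ → ω t < c / (2 * Cω) := by
    intro t ht1 ht2
    have h := hδ (Set.mem_Ioi.2 ht1)
      (by rw [Real.dist_eq, sub_zero, abs_of_pos ht1]; exact ht2)
    rwa [Real.dist_eq, sub_zero, abs_of_nonneg (hω.2.1 t)] at h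
  refine ⟨c₀, C₀, max (max 3 (32 * (d:ℝ))) (1/δ + 1), hc₀, hc₀C₀,
    le_trans (le_max_left _ _) (le_max_left _ _), ?_⟩
  intro A hA Q1 D0 D2 hD0 hD2
  have hA3 : 3 ≤ A := le_trans (le_trans (le_max_left _ _) (le_max_left _ _)) hA
  have hA32 : 32 * (d:ℝ) ≤ A := le_trans (le_trans (le_max_right _ _) (le_max_left _ _)) hA
  have hAδ' : 1/δ + 1 ≤ A := le_trans (le_max_right _ _) hA
  have hA0 : 0 < A := by linarith only [hA3]
  have hAδ : A⁻¹ < δ := by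
    rw [inv_eq_one_div, div_lt_iff₀ hA0]
    have h1 : 1/δ < A := by linarith only [hAδ']
    rw [div_lt_iff₀ hδ0] at h1
    nlinarith only [h1]
  have hωA : ω A⁻¹ < c / (2 * Cω) := hsmall _ (by positivity) hAδ
  have hω0A : 0 ≤ ω A⁻¹ := hω.2.1 _
  set ℓ := Q1.side with hℓdef
  have hℓ : 0 < ℓ := Q1.side_pos
  set c1 := Q1.center with hc1def
  set r := A * ℓ with hrdef
  have hr : 0 < r := by positivity
  have hdivmono : ∀ a b : ℝ, a ≤ b → a / A^(2*d) ≤ b / A^(2*d) := fun a b hab =>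
    div_le_div_of_nonneg_right hab (by positivity)
  obtain ⟨x0, x2, hMx, hKlow⟩ := hnd.1 c1 r hr
  have hrS : r < ‖x0 - c1‖ + ‖x0 - x2‖ := lt_of_lt_of_le hMx (tri _ _ _)
  have hne0 : ¬(x0 = c1 ∧ c1 = x2) := by
    rintro ⟨rfl, rfl⟩
    simp at hrS
    linarith only [hrS, hr]
  have hKup : ‖K x0 c1 x2‖ ≤ CK / (‖x0 - c1‖ + ‖x0 - x2‖) ^ (2*d) := hsize _ _ _ hne0
  have hSC₁ : ‖x0 - c1‖ + ‖x0 - x2‖ ≤ C₁ * r := hroot _ r hr (by positivity) (hKlow.trans hKup)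
  -- the dyadic side length
  set k : ℤ := Int.log 2 ℓ + 1 with hkdef
  set s : ℝ := (2:ℝ) ^ k with hsdef
  have hs1 : ℓ < s := by
    have h := Int.lt_zpow_succ_log_self (b := 2) (by norm_num) ℓ
    rw [hsdef, hkdef]
    push_cast at h ⊢
    exact h
  have hs2 : s ≤ 2 * ℓ := by
    have h := Int.zpow_log_le_self (b := 2) (by norm_num) hℓ
    have h2 : s = (2:ℝ) ^ (Int.log 2 ℓ) * 2 := by
      rw [hsdef, hkdef, zpow_add_one₀ (by norm_num : (2:ℝ) ≠ 0)]
    push_cast at h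
    rw [h2]
    linarith only [h]
  have hs0 : 0 < s := lt_trans hℓ hs1
  obtain ⟨Q0, ⟨hQ0D, hQ0s, hx0Q0⟩, -⟩ := hD0.2.1 k x0
  obtain ⟨Q2, ⟨hQ2D, hQ2s, hx2Q2⟩, -⟩ := hD2.2.1 k x2
  rw [← hsdef] at hQ0s hQ2s
  -- geometry
  have hdiam0 : ∀ u ∈ Q0.set, ‖u - x0‖ ≤ 2 * (d:ℝ) * ℓ := by
    intro u hu
    have h := Cube.norm_sub_le hu hx0Q0
    rw [hQ0s] at h
    nlinarith only [h, hs2, hd1, hℓ]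
  have hdiam1 : ∀ v ∈ Q1.set, ‖v - c1‖ ≤ 2 * (d:ℝ) * ℓ := by
    intro v hv
    have h := Cube.norm_sub_le hv Q1.center_mem
    rw [← hℓdef, ← hc1def] at h
    nlinarith only [h, hd1, hℓ]
  have hdiam2 : ∀ w ∈ Q2.set, ‖w - x2‖ ≤ 2 * (d:ℝ) * ℓ := by
    intro w hw
    have h := Cube.norm_sub_le hw hx2Q2
    rw [hQ2s] at h
    nlinarith only [h, hs2, hd1, hℓ]
  set R := r / 2 with hRdef
  have hR : 0 < R := by positivity
  have hsums : ∀ u ∈ Q0.set, ∀ v ∈ Q1.set, ∀ w ∈ Q2.set,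
      R ≤ ‖u - v‖ + ‖u - w‖ ∧ R ≤ ‖v - u‖ + ‖v - w‖ ∧ R ≤ ‖w - u‖ + ‖w - v‖ := by
    intro u hu v hv w hw
    have h := sums_ge hMx.le (hdiam0 u hu) (hdiam1 v hv) (hdiam2 w hw)
    have hstep : R ≤ r - 2 * (2 * (d:ℝ) * ℓ) := by
      rw [hRdef, hrdef]
      nlinarith only [hA32, hℓ, hd1]
    exact ⟨hstep.trans h.1, hstep.trans h.2.1, hstep.trans h.2.2⟩
  have hcond0 : 2 * (d:ℝ) * ℓ ≤ R / 4 := by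
    rw [hRdef, hrdef]
    nlinarith only [hA32, hℓ, hd1]
  have haA : (0:ℝ) < A ^ (2*d) := by positivity
  have hvolm : A ^ (2*d) * Q1.vol ^ 2 = r ^ (2*d) := by
    have h1 : Q1.vol = ℓ ^ d := rfl
    have h2 : (ℓ ^ d) ^ 2 = ℓ ^ (2*d) := by rw [← pow_mul, mul_comm]
    rw [h1, h2, hrdef, mul_pow]
  -- volumes
  have hv0R : (volume Q0.set).toReal = s ^ d := by
    rw [Cube.volume_set, hQ0s, ENNReal.toReal_ofReal (by positivity)]
  have hv2R : (volume Q2.set).toReal = s ^ d := by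
    rw [Cube.volume_set, hQ2s, ENNReal.toReal_ofReal (by positivity)]
  have hvv : (volume Q0.set).toReal * (volume Q2.set).toReal = s ^ (2*d) := by
    rw [hv0R, hv2R, ← pow_add, two_mul]
  have hvvle : (volume Q0.set).toReal * (volume Q2.set).toReal ≤ (2*ℓ) ^ (2*d) := by
    rw [hvv]
    exact pow_le_pow_left₀ hs0.le hs2 _
  have hvvge : ℓ ^ (2*d) ≤ (volume Q0.set).toReal * (volume Q2.set).toReal := by
    rw [hvv]
    exact pow_le_pow_left₀ hℓ.le hs1.le _
  refine ⟨Q0, hQ0D, Q2, hQ2D, x0, hx0Q0, x2, hx2Q2, ?_, ?_, ?_, ?_⟩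
  · -- (i)
    have e3 : ‖x2 - c1‖ ≤ ‖x0 - c1‖ + ‖x0 - x2‖ := by
      have h := dist_triangle x2 x0 c1
      simp only [dist_eq_norm] at h
      have h2 : ‖x2 - x0‖ = ‖x0 - x2‖ := norm_sub_rev _ _
      linarith only [h, h2]
    have m1 := le_max_left ‖x0 - c1‖ ‖x2 - c1‖
    have m2 := le_max_right ‖x0 - c1‖ ‖x2 - c1‖
    have hmaxlow : r / 2 ≤ max ‖x0 - c1‖ ‖x2 - c1‖ := by
      have e1 : ‖x2 - c1‖ = ‖c1 - x2‖ := norm_sub_rev _ _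
      have e2 : ‖x0 - x2‖ ≤ ‖x0 - c1‖ + ‖c1 - x2‖ := by
        have h := dist_triangle x0 c1 x2
        simpa [dist_eq_norm] using h
      rcases le_max_iff.mp hMx.le with h | h
      · rcases le_max_iff.mp h with h' | h'
        · linarith only [h', m1, hr]
        · linarith only [h', m1, m2, e1, e2, hr]
      · linarith only [h, m2, e1, hr]
    have hmaxup : max ‖x0 - c1‖ ‖x2 - c1‖ ≤ C₁ * r := by
      apply max_le
      · refine le_trans ?_ hSC₁
        linarith only [norm_nonneg (x0 - x2)]
      · exact e3.trans hSC₁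
    refine ⟨?_, ?_, ?_, ?_, ?_, ?_⟩
    · refine le_trans ?_ hmaxlow
      nlinarith only [hc₀half, hr, hc₀]
    · refine hmaxup.trans ?_
      nlinarith only [hC₁C₀, hr, hC₁0]
    · rw [hQ0s]; nlinarith only [hc₀half, hs1, hℓ, hc₀]
    · rw [hQ0s]; nlinarith only [hs2, hC₀2, hℓ]
    · rw [hQ2s]; nlinarith only [hc₀half, hs1, hℓ, hc₀]
    · rw [hQ2s]; nlinarith only [hs2, hC₀2, hℓ]
  · -- (ii)
    rw [hvolm]
    constructor
    · refine le_trans ?_ hKlow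
      apply div_le_div_of_nonneg_right ?_ (by positivity) |>.trans_eq rfl
      linarith only [hc₀c, hc]
    · refine hKup.trans ?_
      apply div_le_div₀ (by linarith only [hCKC₀, hCK]) hCKC₀ (by positivity)
      exact pow_le_pow_left₀ hr.le hrS.le _
  all_goals {
  -- (iii) & (iv): shared work
  have pack : ∀ y ∈ Q1.set,
      ((∫ x in Q0.set, ∫ z in Q2.set, ‖K x y z - K x0 c1 x2‖) ≤ C₀ * ω A⁻¹ / A ^ (2*d)) ∧
      (c₀ / A ^ (2*d) ≤ ‖∫ x in Q0.set, ∫ z in Q2.set, K x y z‖ ∧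
       ‖∫ x in Q0.set, ∫ z in Q2.set, K x y z‖ ≤ ∫ x in Q0.set, ∫ z in Q2.set, ‖K x y z‖ ∧
       (∫ x in Q0.set, ∫ z in Q2.set, ‖K x y z‖) ≤ C₀ / A ^ (2*d)) := by
    intro y hy
    set W := ω (2 * (d:ℝ) * ℓ * (2 / R)) * (2 / R) ^ (2*d) with hWdef
    have hW0 : 0 ≤ W := mul_nonneg (hω.2.1 _) (by positivity)
    have ωmono := hω.2.2.1
    have hosc : ∀ x ∈ Q0.set, ∀ z ∈ Q2.set, ‖K x y z - K x0 c1 x2‖ ≤ 3 * W := by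
      intro x hx z hz
      have t4 : ‖K x y z - K x0 c1 x2‖ ≤
          ‖K x y z - K x0 y z‖ + ‖K x0 y z - K x0 c1 z‖ + ‖K x0 c1 z - K x0 c1 x2‖ := by
        have h := dist_triangle4 (K x y z) (K x0 y z) (K x0 c1 z) (K x0 c1 x2)
        simpa [dist_eq_norm] using h
      have e1 : ‖K x y z - K x0 y z‖ ≤ W := by
        refine (reg1 hreg hω hR (hsums x hx y hy z hz).1 ((hdiam0 x hx).trans hcond0)).trans ?_
        rw [hWdef]
        apply mul_le_mul_of_nonneg_right _ (by positivity)
        exact ωmono (Set.mem_Ici.2 (by positivity)) (Set.mem_Ici.2 (by positivity))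
          (mul_le_mul_of_nonneg_right (hdiam0 x hx) (by positivity))
      have e2 : ‖K x0 y z - K x0 c1 z‖ ≤ W := by
        refine (reg2 hreg hω hR (hsums x0 hx0Q0 y hy z hz).2.1
          ((hdiam1 y hy).trans hcond0)).trans ?_
        rw [hWdef]
        apply mul_le_mul_of_nonneg_right _ (by positivity)
        exact ωmono (Set.mem_Ici.2 (by positivity)) (Set.mem_Ici.2 (by positivity))
          (mul_le_mul_of_nonneg_right (hdiam1 y hy) (by positivity))
      have e3 : ‖K x0 c1 z - K x0 c1 x2‖ ≤ W := by
        have hsum3 : R ≤ ‖z - c1‖ + ‖z - x0‖ := by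
          have h := (hsums x0 hx0Q0 c1 Q1.center_mem z hz).2.2
          linarith only [h]
        refine (reg3 hreg hω hR hsum3 ((hdiam2 z hz).trans hcond0)).trans ?_
        rw [hWdef]
        apply mul_le_mul_of_nonneg_right _ (by positivity)
        exact ωmono (Set.mem_Ici.2 (by positivity)) (Set.mem_Ici.2 (by positivity))
          (mul_le_mul_of_nonneg_right (hdiam2 z hz) (by positivity))
      linarith only [t4, e1, e2, e3]
    have hsz : ∀ x ∈ Q0.set, ∀ z ∈ Q2.set, ‖K x y z‖ ≤ CK * (2/r) ^ (2*d) := by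
      intro x hx z hz
      have hsum := (hsums x hx y hy z hz).1
      have hne : ¬(x = y ∧ y = z) := by
        rintro ⟨rfl, rfl⟩
        simp at hsum
        linarith only [hsum, hR]
      refine (hsize x y z hne).trans ?_
      have hpos : 0 < ‖x - y‖ + ‖x - z‖ := lt_of_lt_of_le hR hsum
      rw [div_eq_mul_one_div]
      apply mul_le_mul_of_nonneg_left _ hCK.le
      rw [div_le_iff₀ (by positivity), ← mul_pow]
      apply one_le_pow₀
      have hRr : R = r / 2 := hRdef
      rw [div_mul_eq_mul_div, le_div_iff₀ hr]
      linarith only [hsum, hRr]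
    have hcontz : ∀ x ∈ Q0.set, ContinuousOn (fun z => K x y z) Q2.set := by
      intro x hx
      apply contOn_of_modulus hω hR (C := (2/R)^(2*d))
      intro p hp q hq hpq
      have hsum3 : R ≤ ‖p - y‖ + ‖p - x‖ := by
        have h := (hsums x hx y hy p hp).2.2
        linarith only [h]
      exact reg3 hreg hω hR hsum3 hpq
    have hmod1 : ∀ p ∈ Q0.set, ∀ q ∈ Q0.set, ‖p - q‖ ≤ R/4 → ∀ z ∈ Q2.set,
        ‖K p y z - K q y z‖ ≤ ω (‖p - q‖ * (2/R)) * ((2/R)^(2*d)) := by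
      intro p hp q hq hpq z hz
      exact reg1 hreg hω hR (hsums p hp y hy z hz).1 hpq
    obtain ⟨I1, I2, I3, I4⟩ := core_int hω Q0.measurableSet_set Q2.measurableSet_set
      (by rw [Cube.volume_set]; exact ENNReal.ofReal_lt_top)
      (by rw [Cube.volume_set]; exact ENNReal.ofReal_lt_top)
      hR (by linarith only [hW0]) (by positivity) (by positivity) hosc hsz hcontz hmod1
    -- main numeric bound for the oscillation term
    have hWbound : 3 * W * ((2*ℓ) ^ (2*d)) ≤ Cω * ω A⁻¹ / A ^ (2*d) := by
      have harg : 2 * (d:ℝ) * ℓ * (2 / R) = ((8 * d : ℕ):ℝ) * A⁻¹ := by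
        rw [hRdef, hrdef]
        push_cast
        field_simp
        ring
      have hωterm : ω (2 * (d:ℝ) * ℓ * (2 / R)) ≤ 8 * (d:ℝ) * ω A⁻¹ := by
        rw [harg]
        refine (hω.nsmul_le (8*d) A⁻¹ (by positivity)).trans (le_of_eq ?_)
        push_cast
        ring
      have hpow8 : (2 / R) ^ (2*d) * (2*ℓ) ^ (2*d) = 8 ^ (2*d) / A ^ (2*d) := by
        rw [← mul_pow, ← div_pow]
        congr 1
        rw [hRdef, hrdef]
        field_simp
        ring
      calc 3 * W * ((2*ℓ)^(2*d))
          = 3 * ω (2*(d:ℝ)*ℓ*(2/R)) * ((2/R)^(2*d) * (2*ℓ)^(2*d)) := by rw [hWdef]; ring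
        _ ≤ 3 * (8*(d:ℝ)*ω A⁻¹) * (8^(2*d)/A^(2*d)) := by
            rw [hpow8]
            apply mul_le_mul_of_nonneg_right _ (by positivity)
            linarith only [hωterm]
        _ = Cω * ω A⁻¹ / A^(2*d) := by rw [hCωdef]; ring
    have hoscvv : 3 * W * ((volume Q0.set).toReal * (volume Q2.set).toReal)
        ≤ Cω * ω A⁻¹ / A ^ (2*d) :=
      le_trans (mul_le_mul_of_nonneg_left hvvle (by linarith only [hW0])) hWbound
    refine ⟨?_, ?_, I2, ?_⟩
    · exact (I1.trans hoscvv).trans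
        (hdivmono _ _ (mul_le_mul_of_nonneg_right hCωC₀ hω0A))
    · -- lower bound in (iv)
      have hsmulnorm : ‖((volume Q0.set).toReal * (volume Q2.set).toReal) • K x0 c1 x2‖
          = ((volume Q0.set).toReal * (volume Q2.set).toReal) * ‖K x0 c1 x2‖ := by
        rw [norm_smul, Real.norm_of_nonneg (by positivity)]
      have hlow1 : c / A^(2*d) ≤
          ((volume Q0.set).toReal * (volume Q2.set).toReal) * ‖K x0 c1 x2‖ := by
        have h2 : ℓ^(2*d) * (c / r^(2*d)) = c / A^(2*d) := by
          have hln : (ℓ:ℝ) ^ (2*d) ≠ 0 := by positivity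
          have hAn : (A:ℝ) ^ (2*d) ≠ 0 := by positivity
          rw [hrdef, mul_pow]
          field_simp
        calc c / A^(2*d) = ℓ^(2*d) * (c / r^(2*d)) := h2.symm
          _ ≤ _ := mul_le_mul hvvge hKlow (by positivity) (by positivity)
      have hnum : Cω * ω A⁻¹ ≤ c / 2 := by
        have h1 : ω A⁻¹ ≤ c / (2 * Cω) := hωA.le
        have h2 : Cω * ω A⁻¹ ≤ Cω * (c / (2 * Cω)) := mul_le_mul_of_nonneg_left h1 hCω.le
        have h3 : Cω * (c / (2 * Cω)) = c / 2 := by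
          field_simp [hCω.ne']
        linarith only [h2, h3]
      have hosc_tot : ‖(∫ x in Q0.set, ∫ z in Q2.set, K x y z) -
          ((volume Q0.set).toReal * (volume Q2.set).toReal) • K x0 c1 x2‖
          ≤ (c/2) / A^(2*d) := by
        exact (I4.trans hoscvv).trans (hdivmono _ _ hnum)
      have hh := norm_sub_norm_le
        (((volume Q0.set).toReal * (volume Q2.set).toReal) • K x0 c1 x2)
        (∫ x in Q0.set, ∫ z in Q2.set, K x y z)
      rw [norm_sub_rev ((((volume Q0.set).toReal * (volume Q2.set).toReal)) • K x0 c1 x2),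
        hsmulnorm] at hh
      have e2 : c₀ / A^(2*d) ≤ (c/2) / A^(2*d) := hdivmono _ _ hc₀c
      have e3 : c / A^(2*d) - (c/2)/A^(2*d) = (c/2)/A^(2*d) := by ring
      linarith only [hh, hosc_tot, hlow1, e2, e3]
    · -- upper bound in (iv)
      refine I3.trans ?_
      have hp : (2/r)^(2*d) * (2*ℓ)^(2*d) = 4^(2*d)/A^(2*d) := by
        rw [← mul_pow, ← div_pow]
        congr 1
        rw [hrdef]
        field_simp
        ring
      calc CK * (2/r)^(2*d) * ((volume Q0.set).toReal * (volume Q2.set).toReal)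
          ≤ CK * (2/r)^(2*d) * (2*ℓ)^(2*d) := by
            apply mul_le_mul_of_nonneg_left hvvle (by positivity)
        _ = CK * (4^(2*d)/A^(2*d)) := by rw [mul_assoc, hp]
        _ = (4^(2*d) * CK) / A^(2*d) := by ring
        _ ≤ C₀ / A^(2*d) := hdivmono _ _ h4CKC₀
  first
  | exact fun y hy => (pack y hy).1
  | exact fun y hy => (pack y hy).2
  }


end Paper
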